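/- Theorem 1 (descent in the large-gradient regime): if f : ℝ^d → ℝ is β-smooth, L_max < 1/β, and the point x satisfies ‖∇f(x)‖ ≥ √(3 η_c β σ²), then after one SGD-PLRS step x' = x − (η_c + u) g one has E[f(x')] − f(x) ≤ −β η_c² σ² / 3. -/

import Mathlib

set_option maxHeartbeats 1000000

open MeasureTheory ProbabilityTheory RealInnerProductSpace

lemma descent_aux {d : ℕ} (f : EuclideanSpace ℝ (Fin d) → ℝ) (β : ℝ) (hβ : 0 ≤ β)
    (hdiff : Differentiable ℝ f)
    (hsmooth : ∀ a b : EuclideanSpace ℝ (Fin d),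
      ‖gradient f a - gradient f b‖ ≤ β * ‖a - b‖)
    (x y : EuclideanSpace ℝ (Fin d)) :
    |f y - f x - ⟪gradient f x, y - x⟫| ≤ β / 2 * ‖y - x‖ ^ 2 := by
  set v := y - x with hv
  set G := gradient f x with hG
  have hlip : LipschitzWith β.toNNReal (gradient f) := by
    apply LipschitzWith.of_dist_le_mul
    intro a b
    rw [dist_eq_norm, dist_eq_norm, Real.coe_toNNReal β hβ]
    exact hsmooth a b
  have key : ∀ t : ℝ, HasDerivAt (fun s : ℝ => f (x + s • v))
      ⟪gradient f (x + t • v), v⟫ t := by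
    intro t
    have h1 : HasFDerivAt f ((InnerProductSpace.toDual ℝ _) (gradient f (x + t • v)))
        (x + t • v) := hasGradientAt_iff_hasFDerivAt.mp (hdiff _).hasGradientAt
    have h2 : HasDerivAt (fun s : ℝ => x + s • v) v t := by
      simpa using ((hasDerivAt_id t).smul_const v).const_add x
    simpa [InnerProductSpace.toDual_apply_apply, Function.comp_def] using h1.comp_hasDerivAt t h2
  have contc : Continuous fun t : ℝ => x + t • v :=
    continuous_const.add (continuous_id.smul continuous_const)
  have conti : Continuous fun t : ℝ => ⟪gradient f (x + t • v), v⟫ :=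
    (hlip.continuous.comp contc).inner continuous_const
  have ftc : ∫ t in (0:ℝ)..1, ⟪gradient f (x + t • v), v⟫ =
      f (x + (1:ℝ) • v) - f (x + (0:ℝ) • v) :=
    intervalIntegral.integral_eq_sub_of_hasDerivAt (fun t _ => key t)
      (conti.intervalIntegrable 0 1)
  have hx1 : x + (1:ℝ) • v = y := by simp [hv]
  have hx0 : x + (0:ℝ) • v = x := by simp
  rw [hx1, hx0] at ftc
  have hsplit : f y - f x - ⟪G, v⟫ = ∫ t in (0:ℝ)..1, ⟪gradient f (x + t • v) - G, v⟫ := by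
    have : (fun t : ℝ => ⟪gradient f (x + t • v) - G, v⟫)
        = fun t : ℝ => ⟪gradient f (x + t • v), v⟫ - ⟪G, v⟫ := by
      funext t; rw [inner_sub_left]
    rw [this, intervalIntegral.integral_sub (conti.intervalIntegrable 0 1)
      (intervalIntegrable_const), ftc]
    simp
  rw [hsplit]
  have habs : |∫ t in (0:ℝ)..1, ⟪gradient f (x + t • v) - G, v⟫|
      ≤ ∫ t in (0:ℝ)..1, β * t * ‖v‖ ^ 2 := by
    refine (intervalIntegral.abs_integral_le_integral_abs zero_le_one).trans ?_
    refine intervalIntegral.integral_mono_on zero_le_one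
      ((((hlip.continuous.comp contc).sub continuous_const).inner continuous_const).abs.intervalIntegrable 0 1)
      (Continuous.intervalIntegrable ((continuous_const.mul continuous_id).mul continuous_const) 0 1) ?_
    intro t ht
    calc |⟪gradient f (x + t • v) - G, v⟫| ≤ ‖gradient f (x + t • v) - G‖ * ‖v‖ :=
          abs_real_inner_le_norm _ _
      _ ≤ (β * ‖(x + t • v) - x‖) * ‖v‖ := by
          gcongr; exact hsmooth _ _
      _ = β * t * ‖v‖ ^ 2 := by
          rw [add_sub_cancel_left, norm_smul, Real.norm_eq_abs,
            abs_of_nonneg ht.1]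
          ring
  have hval : ∫ t in (0:ℝ)..1, β * t * ‖v‖ ^ 2 = β / 2 * ‖v‖ ^ 2 := by
    have : (fun t : ℝ => β * t * ‖v‖ ^ 2) = fun t : ℝ => (β * ‖v‖ ^ 2) * t := by
      funext t; ring
    rw [this, intervalIntegral.integral_const_mul, integral_id]
    ring
  calc |∫ t in (0:ℝ)..1, ⟪gradient f (x + t • v) - G, v⟫| ≤ _ := habs
    _ = β / 2 * ‖v‖ ^ 2 := hval

lemma unif_ae_mem {Ω : Type} [MeasurableSpace Ω] {μ : Measure Ω} {X : Ω → ℝ} {a b : ℝ}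
    (hab : a < b) (hu : pdf.IsUniform X (Set.Icc a b) μ volume) :
    ∀ᵐ ω ∂μ, X ω ∈ Set.Icc a b := by
  have hvol : volume (Set.Icc a b) = ENNReal.ofReal (b - a) := Real.volume_Icc
  have h0 : volume (Set.Icc a b) ≠ 0 := by
    rw [hvol]; simp [ENNReal.ofReal_eq_zero, not_le, sub_pos, hab]
  have hT : volume (Set.Icc a b) ≠ ⊤ := by rw [hvol]; exact ENNReal.ofReal_ne_top
  have := hu.measure_preimage h0 hT (A := (Set.Icc a b)ᶜ) measurableSet_Icc.compl
  rw [Set.inter_compl_self, measure_empty, ENNReal.zero_div] at this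
  exact ae_iff.mpr this

lemma unif_integral {Ω : Type} [MeasurableSpace Ω] {μ : Measure Ω} {X : Ω → ℝ} {a b : ℝ}
    (hab : a < b) (hu : pdf.IsUniform X (Set.Icc a b) μ volume)
    (φ : ℝ → ℝ) (hφ : Continuous φ) :
    ∫ ω, φ (X ω) ∂μ = (b - a)⁻¹ * ∫ t in Set.Icc a b, φ t := by
  have hvol : volume (Set.Icc a b) = ENNReal.ofReal (b - a) := Real.volume_Icc
  have h0 : volume (Set.Icc a b) ≠ 0 := by
    rw [hvol]; simp [ENNReal.ofReal_eq_zero, not_le, sub_pos, hab]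
  have hT : volume (Set.Icc a b) ≠ ⊤ := by rw [hvol]; exact ENNReal.ofReal_ne_top
  have hm : AEMeasurable X μ := hu.aemeasurable h0 hT
  calc ∫ ω, φ (X ω) ∂μ = ∫ t, φ t ∂(Measure.map X μ) :=
        (integral_map hm hφ.aestronglyMeasurable).symm
    _ = ∫ t, φ t ∂((volume (Set.Icc a b))⁻¹ • volume.restrict (Set.Icc a b)) := by
        rw [hu]; rfl
    _ = (volume (Set.Icc a b))⁻¹.toReal • ∫ t in Set.Icc a b, φ t :=
        integral_smul_measure _ _
    _ = (b - a)⁻¹ * ∫ t in Set.Icc a b, φ t := by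
        rw [hvol, ← ENNReal.ofReal_inv_of_pos (by linarith), ENNReal.toReal_ofReal
          (inv_nonneg.mpr (by linarith))]
        rfl

/-- **Theorem 1 (descent in the large-gradient regime).** If `f` is `β`-smooth,
`Lmax < 1/β`, and `‖∇f(x)‖ ≥ √(3 ηc β σ²)`, then after one SGD-PLRS step
`x' = x - (ηc + u) • g` one has `E[f(x')] - f(x) ≤ -β ηc² σ² / 3`. -/
theorem sgd_plrs_large_gradient_descent
    {Ω : Type} [MeasurableSpace Ω] (μ : Measure Ω) [IsProbabilityMeasure μ]
    {d : ℕ} (f : EuclideanSpace ℝ (Fin d) → ℝ) (β σ : ℝ) (hβ : 0 < β)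
    (hdiff : Differentiable ℝ f)
    (hsmooth : ∀ a b : EuclideanSpace ℝ (Fin d),
      ‖gradient f a - gradient f b‖ ≤ β * ‖a - b‖)
    (x : EuclideanSpace ℝ (Fin d))
    (Lmin Lmax ηc : ℝ)
    (hLmin : 0 < Lmin) (hLL : Lmin < Lmax) (hLmax : Lmax < 1)
    (hLβ : Lmax < 1 / β)
    (hηc : ηc = (Lmin + Lmax) / 2)
    (u : Ω → ℝ) (g : Ω → EuclideanSpace ℝ (Fin d))
    (hu : pdf.IsUniform u (Set.Icc (Lmin - ηc) (Lmax - ηc)) μ volume)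
    (hindep : IndepFun u g μ)
    (hg_int : Integrable g μ)
    (hg2_int : Integrable (fun ω => ‖g ω‖ ^ 2) μ)
    (hg_mean : ∫ ω, g ω ∂μ = gradient f x)
    (hσ : ∫ ω, ‖g ω - gradient f x‖ ^ 2 ∂μ ≤ σ ^ 2)
    (hgrad_large : Real.sqrt (3 * ηc * β * σ ^ 2) ≤ ‖gradient f x‖)
    (x' : Ω → EuclideanSpace ℝ (Fin d))
    (hx' : ∀ ω, x' ω = x - (ηc + u ω) • g ω) :
    ∫ ω, f (x' ω) ∂μ - f x ≤ -(β * ηc ^ 2 * σ ^ 2 / 3) := by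
  set G := gradient f x with hG
  set a := Lmin - ηc with ha
  set b := Lmax - ηc with hb
  have hab : a < b := by rw [ha, hb]; linarith
  have hηpos : 0 < ηc := by rw [hηc]; linarith
  have hσ2 : (0:ℝ) ≤ σ ^ 2 := sq_nonneg σ
  -- measurability of u
  have h0 : volume (Set.Icc a b) ≠ 0 := by
    rw [Real.volume_Icc]; simp [ENNReal.ofReal_eq_zero, not_le, sub_pos, hab]
  have hT : volume (Set.Icc a b) ≠ ⊤ := by rw [Real.volume_Icc]; exact ENNReal.ofReal_ne_top
  have hu_meas : AEMeasurable u μ := hu.aemeasurable h0 hT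
  have hg_sm : AEStronglyMeasurable g μ := hg_int.aestronglyMeasurable
  -- a.e. bounds on η = ηc + u
  have hmem : ∀ᵐ ω ∂μ, u ω ∈ Set.Icc a b := unif_ae_mem hab hu
  have hηbd : ∀ᵐ ω ∂μ, |ηc + u ω| ≤ Lmax := by
    filter_upwards [hmem] with ω hω
    rw [abs_le]
    constructor
    · have := hω.1; rw [ha] at this; linarith
    · have := hω.2; rw [hb] at this; linarith
  -- first moment of η
  have hIcc : ∀ φ : ℝ → ℝ, Continuous φ →
      ∫ t in Set.Icc a b, φ t = ∫ t in a..b, φ t := by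
    intro φ hφ
    rw [intervalIntegral.integral_of_le hab.le, integral_Icc_eq_integral_Ioc]
  have hba : b - a = Lmax - Lmin := by rw [ha, hb]; ring
  have hca : ηc + a = Lmin := by rw [ha]; ring
  have hcb : ηc + b = Lmax := by rw [hb]; ring
  have E1 : ∫ ω, (ηc + u ω) ∂μ = ηc := by
    rw [unif_integral hab hu (fun t => ηc + t) (by continuity),
      hIcc _ (by continuity)]
    have : ∫ t in a..b, (ηc + t) = ∫ t in (ηc + a)..(ηc + b), t := by
      rw [← intervalIntegral.integral_comp_add_left (fun t => t) ηc]
    rw [this, hca, hcb, integral_id, hba, hηc]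
    have hd : Lmax - Lmin ≠ 0 := by linarith
    field_simp
    ring
  have E2 : ∫ ω, (ηc + u ω) ^ 2 ∂μ = (Lmax ^ 2 + Lmax * Lmin + Lmin ^ 2) / 3 := by
    rw [unif_integral hab hu (fun t => (ηc + t) ^ 2) (by continuity),
      hIcc _ (by continuity)]
    have : ∫ t in a..b, (ηc + t) ^ 2 = ∫ t in (ηc + a)..(ηc + b), t ^ 2 := by
      rw [← intervalIntegral.integral_comp_add_left (fun t => t ^ 2) ηc]
    rw [this, hca, hcb, integral_pow, hba]
    have hd : Lmax - Lmin ≠ 0 := by linarith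
    field_simp
    ring
  set m2 : ℝ := (Lmax ^ 2 + Lmax * Lmin + Lmin ^ 2) / 3 with hm2def
  have hm2le : m2 ≤ 4 / 3 * ηc ^ 2 := by rw [hm2def, hηc]; nlinarith
  have hm2pos : 0 ≤ m2 := by rw [hm2def]; nlinarith
  -- integrability of η and η²
  have hη_sm : AEStronglyMeasurable (fun ω => ηc + u ω) μ :=
    (aemeasurable_const.add hu_meas).aestronglyMeasurable
  have hη_int : Integrable (fun ω => ηc + u ω) μ := by
    refine Integrable.mono' (integrable_const Lmax) hη_sm ?_
    filter_upwards [hηbd] with ω hω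
    rwa [Real.norm_eq_abs]
  have hη2_int : Integrable (fun ω => (ηc + u ω) ^ 2) μ := by
    refine Integrable.mono' (integrable_const (Lmax ^ 2))
      (hη_sm.pow 2) ?_
    filter_upwards [hηbd] with ω hω
    rw [Real.norm_eq_abs, abs_pow]
    exact pow_le_pow_left₀ (abs_nonneg _) hω 2
  -- inner product with G
  have hψc : Continuous (fun y : EuclideanSpace ℝ (Fin d) => ⟪G, y⟫) :=
    continuous_const.inner continuous_id
  have hGg_sm : AEStronglyMeasurable (fun ω => ⟪G, g ω⟫) μ :=
    hψc.comp_aestronglyMeasurable hg_sm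
  have hGg_int : Integrable (fun ω => ⟪G, g ω⟫) μ := by
    refine Integrable.mono' (hg_int.norm.const_mul ‖G‖) hGg_sm ?_
    filter_upwards with ω
    rw [Real.norm_eq_abs]
    exact abs_real_inner_le_norm _ _
  have hinner_mean : ∫ ω, ⟪G, g ω⟫ ∂μ = ‖G‖ ^ 2 := by
    rw [integral_inner hg_int, hg_mean, real_inner_self_eq_norm_sq]
  -- independence products
  have hφmeas : Measurable (fun t : ℝ => ηc + t) := measurable_const.add measurable_id
  have hI1 : IndepFun (fun ω => ηc + u ω) (fun ω => ⟪G, g ω⟫) μ :=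
    hindep.comp hφmeas hψc.measurable
  have P1 : ∫ ω, (ηc + u ω) * ⟪G, g ω⟫ ∂μ = ηc * ‖G‖ ^ 2 := by
    have h : ∫ ω, (ηc + u ω) * ⟪G, g ω⟫ ∂μ
        = (∫ ω, (ηc + u ω) ∂μ) * ∫ ω, ⟪G, g ω⟫ ∂μ :=
      hI1.integral_fun_mul_eq_mul_integral hη_int.aestronglyMeasurable hGg_int.aestronglyMeasurable
    rw [h, E1, hinner_mean]
  have hI2 : IndepFun (fun ω => (ηc + u ω) ^ 2) (fun ω => ‖g ω‖ ^ 2) μ :=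
    hindep.comp (hφmeas.pow_const 2) (measurable_norm.pow_const 2)
  have P2 : ∫ ω, (ηc + u ω) ^ 2 * ‖g ω‖ ^ 2 ∂μ = m2 * ∫ ω, ‖g ω‖ ^ 2 ∂μ := by
    have h : ∫ ω, (ηc + u ω) ^ 2 * ‖g ω‖ ^ 2 ∂μ
        = (∫ ω, (ηc + u ω) ^ 2 ∂μ) * ∫ ω, ‖g ω‖ ^ 2 ∂μ :=
      hI2.integral_fun_mul_eq_mul_integral hη2_int.aestronglyMeasurable hg2_int.aestronglyMeasurable
    rw [h, E2]
  -- second moment of g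
  have hexp : (fun ω => ‖g ω - G‖ ^ 2)
      = fun ω => ‖g ω‖ ^ 2 - 2 * ⟪G, g ω⟫ + ‖G‖ ^ 2 := by
    funext ω
    rw [norm_sub_sq_real, real_inner_comm]
  have hgG_int : Integrable (fun ω => ‖g ω - G‖ ^ 2) μ := by
    rw [hexp]
    exact (hg2_int.sub (hGg_int.const_mul 2)).add (integrable_const _)
  have h2GG : Integrable (fun ω => 2 * ⟪G, g ω⟫) μ := hGg_int.const_mul 2
  have hsub_int : Integrable (fun ω => ‖g ω‖ ^ 2 - 2 * ⟪G, g ω⟫) μ := hg2_int.sub h2GG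
  have hg_sq : ∫ ω, ‖g ω‖ ^ 2 ∂μ ≤ ‖G‖ ^ 2 + σ ^ 2 := by
    have : ∫ ω, ‖g ω - G‖ ^ 2 ∂μ = ∫ ω, ‖g ω‖ ^ 2 ∂μ - ‖G‖ ^ 2 := by
      rw [hexp, integral_add hsub_int (integrable_const _),
        integral_sub hg2_int h2GG, integral_const_mul, hinner_mean,
        integral_const, probReal_univ]
      simp
      ring
    rw [this] at hσ
    linarith
  have hg2nonneg : 0 ≤ ∫ ω, ‖g ω‖ ^ 2 ∂μ :=
    integral_nonneg fun ω => sq_nonneg _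
  -- pointwise descent bound
  have hdd : ∀ ω, |f (x' ω) - f x - ⟪G, x' ω - x⟫| ≤ β / 2 * ‖x' ω - x‖ ^ 2 :=
    fun ω => descent_aux f β hβ.le hdiff hsmooth x (x' ω)
  have hrw : ∀ ω, x' ω - x = -((ηc + u ω) • g ω) := by
    intro ω; rw [hx' ω, sub_sub_cancel_left]
  have hpt : ∀ ω, f (x' ω) ≤ f x - (ηc + u ω) * ⟪G, g ω⟫
      + β / 2 * ((ηc + u ω) ^ 2 * ‖g ω‖ ^ 2) := by
    intro ω
    have h1 := (abs_le.mp (hdd ω)).2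
    rw [hrw ω, inner_neg_right, real_inner_smul_right, norm_neg, norm_smul,
      Real.norm_eq_abs, mul_pow, sq_abs] at h1
    linarith
  have hlow : ∀ ω, |f (x' ω)| ≤ |f x| + |ηc + u ω| * |⟪G, g ω⟫|
      + β / 2 * ((ηc + u ω) ^ 2 * ‖g ω‖ ^ 2) := by
    intro ω
    have h1 := hdd ω
    rw [hrw ω, inner_neg_right, real_inner_smul_right, norm_neg, norm_smul,
      Real.norm_eq_abs, mul_pow, sq_abs] at h1
    have h2 := abs_le.mp h1
    have e1 : (ηc + u ω) * ⟪G, g ω⟫ ≤ |ηc + u ω| * |⟪G, g ω⟫| := by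
      rw [← abs_mul]; exact le_abs_self _
    have e2 : -(|ηc + u ω| * |⟪G, g ω⟫|) ≤ (ηc + u ω) * ⟪G, g ω⟫ := by
      rw [← abs_mul]; exact neg_abs_le _
    have e3 : f x ≤ |f x| := le_abs_self _
    have e4 : -|f x| ≤ f x := neg_abs_le _
    rw [abs_le]
    constructor
    · nlinarith [h2.1]
    · nlinarith [h2.2]
  -- measurability and integrability of f ∘ x'
  have hx'_sm : AEStronglyMeasurable x' μ := by
    have hxe : x' = fun ω => x - (ηc + u ω) • g ω := funext hx'
    rw [hxe]
    exact aestronglyMeasurable_const.sub (hη_sm.smul hg_sm)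
  have hf_meas : AEStronglyMeasurable (fun ω => f (x' ω)) μ :=
    hdiff.continuous.comp_aestronglyMeasurable hx'_sm
  have hbound_int : Integrable (fun ω => |f x| + Lmax * |⟪G, g ω⟫|
      + β / 2 * (Lmax ^ 2 * ‖g ω‖ ^ 2)) μ :=
    ((integrable_const _).add ((hGg_int.abs).const_mul Lmax)).add
      ((hg2_int.const_mul (Lmax ^ 2)).const_mul (β / 2))
  have hf_int : Integrable (fun ω => f (x' ω)) μ := by
    refine Integrable.mono' hbound_int hf_meas ?_
    filter_upwards [hηbd] with ω hω
    rw [Real.norm_eq_abs]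
    refine (hlow ω).trans ?_
    have hb1 : |ηc + u ω| * |⟪G, g ω⟫| ≤ Lmax * |⟪G, g ω⟫| :=
      mul_le_mul_of_nonneg_right hω (abs_nonneg _)
    have hb2 : (ηc + u ω) ^ 2 * ‖g ω‖ ^ 2 ≤ Lmax ^ 2 * ‖g ω‖ ^ 2 := by
      have : (ηc + u ω) ^ 2 ≤ Lmax ^ 2 := by
        rw [← sq_abs]
        exact pow_le_pow_left₀ (abs_nonneg _) hω 2
      exact mul_le_mul_of_nonneg_right this (sq_nonneg _)
    nlinarith [hb1, hb2]
  -- integrability of the RHS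
  have hprod1 : Integrable (fun ω => (ηc + u ω) * ⟪G, g ω⟫) μ := by
    refine Integrable.bdd_mul (c := Lmax) hGg_int hη_sm ?_
    filter_upwards [hηbd] with ω hω
    rwa [Real.norm_eq_abs]
  have hprod2 : Integrable (fun ω => (ηc + u ω) ^ 2 * ‖g ω‖ ^ 2) μ := by
    refine Integrable.bdd_mul (c := Lmax ^ 2) hg2_int (hη_sm.pow 2) ?_
    filter_upwards [hηbd] with ω hω
    rw [Real.norm_eq_abs, abs_pow]
    exact pow_le_pow_left₀ (abs_nonneg _) hω 2
  have hRHS_int : Integrable (fun ω => f x - (ηc + u ω) * ⟪G, g ω⟫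
      + β / 2 * ((ηc + u ω) ^ 2 * ‖g ω‖ ^ 2)) μ :=
    ((integrable_const _).sub hprod1).add (hprod2.const_mul (β / 2))
  -- compare integrals
  have hmono : ∫ ω, f (x' ω) ∂μ ≤ ∫ ω, (f x - (ηc + u ω) * ⟪G, g ω⟫
      + β / 2 * ((ηc + u ω) ^ 2 * ‖g ω‖ ^ 2)) ∂μ :=
    integral_mono hf_int hRHS_int hpt
  have hRHS_val : ∫ ω, (f x - (ηc + u ω) * ⟪G, g ω⟫
      + β / 2 * ((ηc + u ω) ^ 2 * ‖g ω‖ ^ 2)) ∂μ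
      = f x - ηc * ‖G‖ ^ 2 + β / 2 * (m2 * ∫ ω, ‖g ω‖ ^ 2 ∂μ) := by
    have hA : Integrable (fun ω => f x - (ηc + u ω) * ⟪G, g ω⟫) μ :=
      (integrable_const _).sub hprod1
    have hB : Integrable (fun ω => β / 2 * ((ηc + u ω) ^ 2 * ‖g ω‖ ^ 2)) μ :=
      hprod2.const_mul _
    have hC : Integrable (fun _ : Ω => f x) μ := integrable_const _
    rw [integral_add hA hB, integral_sub hC hprod1, integral_const, probReal_univ,
      integral_const_mul, P1, P2]
    simp
  -- final arithmetic
  have hK : 3 * ηc * β * σ ^ 2 ≤ ‖G‖ ^ 2 := by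
    have h3 : 0 ≤ 3 * ηc * β * σ ^ 2 := by positivity
    calc 3 * ηc * β * σ ^ 2 = Real.sqrt (3 * ηc * β * σ ^ 2) ^ 2 :=
          (Real.sq_sqrt h3).symm
      _ ≤ ‖G‖ ^ 2 := pow_le_pow_left₀ (Real.sqrt_nonneg _) hgrad_large 2
  have hK0 : (0:ℝ) ≤ ‖G‖ ^ 2 := sq_nonneg _
  have hβη : β * ηc ≤ 1 := by
    rw [lt_div_iff₀ hβ] at hLβ
    nlinarith
  set Eg2 := ∫ ω, ‖g ω‖ ^ 2 ∂μ with hEg2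
  have s1 : m2 * Eg2 ≤ 4 / 3 * ηc ^ 2 * (‖G‖ ^ 2 + σ ^ 2) :=
    mul_le_mul hm2le hg_sq hg2nonneg (by positivity)
  have s2 : β / 2 * (m2 * Eg2) ≤ β / 2 * (4 / 3 * ηc ^ 2 * (‖G‖ ^ 2 + σ ^ 2)) :=
    mul_le_mul_of_nonneg_left s1 (by positivity)
  have s3 : (β * ηc) * (ηc * ‖G‖ ^ 2) ≤ 1 * (ηc * ‖G‖ ^ 2) :=
    mul_le_mul_of_nonneg_right hβη (mul_nonneg hηpos.le hK0)
  have s4 : ηc * (3 * ηc * β * σ ^ 2) ≤ ηc * ‖G‖ ^ 2 :=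
    mul_le_mul_of_nonneg_left hK hηpos.le
  have hfin : f x - ηc * ‖G‖ ^ 2 + β / 2 * (m2 * Eg2) - f x
      ≤ -(β * ηc ^ 2 * σ ^ 2 / 3) := by
    linarith [s2, s3, s4]
  linarith [hmono.trans_eq hRHS_val]
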